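/- Let R be a noetherian local commutative ring with maximal ideal m that is complete with respect to the m-adic topology, and let R' be an étale R-algebra. Then there exist R-algebras T and S and an R-algebra isomorphism R' ≅ T × S such that T is a finite étale R-algebra and S is an étale R-algebra with S = m·S; in particular S is not a faithfully flat R-module. -/

import Mathlib

open Submodule in
theorem complete_nakayama' {R : Type*} [CommRing R] (I : Ideal R) [IsPrecomplete I R]
    {M : Type*} [AddCommGroup M] [Module R M]
    {N : Submodule R M} (hfg : N.FG)
    (hsup : N ⊔ (I • ⊤ : Submodule R M) = ⊤)
    (hhaus : (⨅ n : ℕ, (I ^ n • ⊤ : Submodule R M)) = ⊥) :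
    N = ⊤ := by
  classical
  obtain ⟨s, hs⟩ := hfg
  have hIR : ∀ n : ℕ, (I ^ n • ⊤ : Submodule R R) = I ^ n := fun n => by
    rw [Ideal.smul_eq_mul, Ideal.mul_top]
  have hsupn : ∀ n : ℕ, (I ^ n • ⊤ : Submodule R M)
      = I ^ n • N ⊔ (I ^ (n+1) • ⊤ : Submodule R M) := by
    intro n
    conv_lhs => rw [← hsup]
    rw [smul_sup, smul_smul, ← pow_succ]
  have step : ∀ (n : ℕ) (y : M), y ∈ (I ^ n • ⊤ : Submodule R M) →
      ∃ (a : (↑s : Set M) →₀ R) (z : M), (∀ i, a i ∈ I ^ n) ∧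
        z ∈ (I ^ (n+1) • ⊤ : Submodule R M) ∧
        y = (a.sum fun i c => c • (i : M)) + z := by
    intro n y hy
    rw [hsupn n] at hy
    obtain ⟨u, hu, z, hz, huz⟩ := Submodule.mem_sup.mp hy
    have hu' : u ∈ (I ^ n) • Submodule.span R
        (Set.range (fun i : (↑s : Set M) => (i : M))) := by
      rwa [Subtype.range_coe, hs]
    obtain ⟨a, ha, ha'⟩ := (Submodule.mem_ideal_smul_span_iff_exists_sum _ _ _).mp hu'
    exact ⟨a, z, ha, hz, by rw [← huz, ha']⟩
  rw [eq_top_iff]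
  intro x _
  let Q : ℕ → Type _ := fun n => {y : M // y ∈ (I ^ n • ⊤ : Submodule R M)}
  let next : ∀ n, Q n → ((↑s : Set M) →₀ R) × Q (n+1) := fun n y =>
    ⟨(step n y.1 y.2).choose, ⟨(step n y.1 y.2).choose_spec.choose,
      (step n y.1 y.2).choose_spec.choose_spec.2.1⟩⟩
  let seq : (n : ℕ) → Q n := fun n =>
    Nat.rec ⟨x, by simp⟩ (fun n p => (next n p).2) n
  let c : ℕ → ((↑s : Set M) →₀ R) := fun n => (next n (seq n)).1
  have hc : ∀ n i, c n i ∈ I ^ n := fun n i =>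
    (step n (seq n).1 (seq n).2).choose_spec.choose_spec.1 i
  have heq : ∀ n, (seq n).1 = ((c n).sum fun i cc => cc • (i : M)) + (seq (n+1)).1 :=
    fun n => (step n (seq n).1 (seq n).2).choose_spec.choose_spec.2.2
  have hcauchy : ∀ i : (↑s : Set M), ∃ L : R, ∀ n,
      (∑ k ∈ Finset.range n, c k i) ≡ L [SMOD (I ^ n • ⊤ : Submodule R R)] := by
    intro i
    apply IsPrecomplete.prec (inferInstance : IsPrecomplete I R)
    intro m n hmn
    rw [SModEq.sub_mem, hIR m, ← Finset.sum_range_add_sum_Ico _ hmn]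
    rw [sub_add_cancel_left]
    apply neg_mem
    apply Submodule.sum_mem
    intro k hk
    exact Ideal.pow_le_pow_right (Finset.mem_Ico.mp hk).1 (hc k i)
  choose L hL using hcauchy
  have hy : (∑ i : (↑s : Set M), L i • (i : M)) ∈ N := by
    apply Submodule.sum_mem
    intro i _
    exact Submodule.smul_mem _ _ (hs ▸ Submodule.subset_span i.2)
  have hpart : ∀ n, x - (∑ i : (↑s : Set M),
      (∑ k ∈ Finset.range n, c k i) • (i : M)) = (seq n).1 := by
    intro n
    induction n with
    | zero => simp; rfl
    | succ n ih =>
      have hsplit : (∑ i : (↑s : Set M), (∑ k ∈ Finset.range (n+1), c k i) • (i : M))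
          = (∑ i : (↑s : Set M), (∑ k ∈ Finset.range n, c k i) • (i : M))
            + (∑ i : (↑s : Set M), c n i • (i : M)) := by
        rw [← Finset.sum_add_distrib]
        congr 1
        ext i
        rw [Finset.sum_range_succ, add_smul]
      have hfs : ((c n).sum fun i cc => cc • (i : M)) = ∑ i : (↑s : Set M), c n i • (i : M) :=
        Finsupp.sum_fintype _ _ (fun i => zero_smul R (i : M))
      rw [hsplit, ← sub_sub, ih, heq n, hfs]
      abel
  have hxy : ∀ n, x - (∑ i : (↑s : Set M), L i • (i : M)) ∈ (I ^ n • ⊤ : Submodule R M) := by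
    intro n
    have h1 : x - (∑ i : (↑s : Set M), L i • (i : M))
        = (seq n).1 + ∑ i : (↑s : Set M),
            ((∑ k ∈ Finset.range n, c k i) - L i) • (i : M) := by
      rw [← hpart n]
      rw [Finset.sum_congr rfl (fun i _ => sub_smul (∑ k ∈ Finset.range n, c k i) (L i) (i : M))]
      rw [Finset.sum_sub_distrib]
      abel
    rw [h1]
    apply Submodule.add_mem _ (seq n).2
    apply Submodule.sum_mem
    intro i _
    have : (∑ k ∈ Finset.range n, c k i) - L i ∈ I ^ n := by
      have := SModEq.sub_mem.mp (hL i n)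
      rwa [hIR n] at this
    exact Submodule.smul_mem_smul this Submodule.mem_top
  have : x - (∑ i : (↑s : Set M), L i • (i : M)) ∈ (⊥ : Submodule R M) := by
    rw [← hhaus]
    exact Submodule.mem_iInf _ |>.mpr hxy
  rw [Submodule.mem_bot, sub_eq_zero] at this
  rw [this]
  exact hy

theorem finite_mod_max_aux (R A : Type*) [CommRing R] [IsLocalRing R] [CommRing A] [Algebra R A]
    [Algebra.FormallyUnramified R A] [Algebra.FiniteType R A] :
    Module.Finite R (A ⧸ (IsLocalRing.maximalIdeal R).map (algebraMap R A)) := by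
  set m := IsLocalRing.maximalIdeal R with hm
  set J := m.map (algebraMap R A) with hJ
  letI : Field (R ⧸ m) := Ideal.Quotient.field m
  letI : Algebra (R ⧸ m) (A ⧸ J) :=
    (Ideal.quotientMap J (algebraMap R A) Ideal.le_comap_map).toAlgebra
  haveI : IsScalarTower R (R ⧸ m) (A ⧸ J) := IsScalarTower.of_algebraMap_eq' (by
    rw [RingHom.algebraMap_toAlgebra, Ideal.Quotient.algebraMap_eq, Ideal.quotientMap_comp_mk]
    rfl)
  haveI : Algebra.FormallyUnramified (R ⧸ m) (A ⧸ J) :=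
    Algebra.FormallyUnramified.of_restrictScalars R (R ⧸ m) (A ⧸ J)
  haveI : Algebra.FiniteType R (A ⧸ J) :=
    Algebra.FiniteType.of_surjective (IsScalarTower.toAlgHom R A (A ⧸ J))
      Ideal.Quotient.mk_surjective
  haveI : Algebra.EssFiniteType (R ⧸ m) (A ⧸ J) :=
    Algebra.EssFiniteType.of_comp R (R ⧸ m) (A ⧸ J)
  haveI : Module.Finite (R ⧸ m) (A ⧸ J) :=
    Algebra.FormallyUnramified.finite_of_free (R ⧸ m) (A ⧸ J)
  haveI : Module.Finite R (R ⧸ m) :=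
    Module.Finite.of_surjective m.mkQ (Submodule.Quotient.mk_surjective m)
  exact Module.Finite.trans (R ⧸ m) (A ⧸ J)

theorem smul_top_iff_aux {R R' C : Type*} [CommRing R] [CommRing R'] [CommRing C]
    [Algebra R R'] [Algebra R C] [Algebra R' C] [IsScalarTower R R' C]
    (m : Ideal R) (n : ℕ) (x : C) :
    x ∈ ((m ^ n : Ideal R) • ⊤ : Submodule R C) ↔
      x ∈ (((m.map (algebraMap R R')) ^ n : Ideal R') • ⊤ : Submodule R' C) := by
  rw [Ideal.smul_top_eq_map, Ideal.smul_top_eq_map, Submodule.restrictScalars_mem,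
    Submodule.restrictScalars_mem, IsScalarTower.algebraMap_eq R R' C, ← Ideal.map_map,
    ← Ideal.map_pow]

set_option maxHeartbeats 1000000 in
/-- Let R be a complete noetherian local ring and R' an étale R-algebra. Then R' is
isomorphic as an R-algebra to a product T × S with T finite étale over R and S étale
over R with S = m·S; in particular S is not faithfully flat over R. -/
theorem etale_algebra_over_complete_local_splits
    (R R' : Type) [CommRing R] [IsLocalRing R] [IsNoetherianRing R]
    [IsAdicComplete (IsLocalRing.maximalIdeal R) R]
    [CommRing R'] [Algebra R R'] [Algebra.Etale R R'] :
    ∃ (T S : Type) (_ : CommRing T) (_ : CommRing S) (_ : Algebra R T) (_ : Algebra R S),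
      Nonempty (R' ≃ₐ[R] T × S) ∧
      Algebra.Etale R T ∧ Module.Finite R T ∧
      Algebra.Etale R S ∧
      (IsLocalRing.maximalIdeal R) • (⊤ : Submodule R S) = ⊤ ∧
      ¬ Module.FaithfullyFlat R S := by
  classical
  set m : Ideal R := IsLocalRing.maximalIdeal R with hmdef
  haveI : Algebra.FiniteType R R' := inferInstance
  haveI hnoeth : IsNoetherianRing R' := Algebra.FiniteType.isNoetherianRing R R'
  set J : Ideal R' := m.map (algebraMap R R') with hJdef
  set B := AdicCompletion J R' with hBdef
  set φ : R' →ₗ[R'] B := AdicCompletion.of J R' with hφdef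
  letI : Algebra R B := inferInstance
  haveI : IsScalarTower R R' B := inferInstance
  have hIR' : ∀ n : ℕ, ((J ^ n : Ideal R') • (⊤ : Submodule R' R')) = J ^ n := fun n => by
    rw [Ideal.smul_eq_mul, Ideal.mul_top]
  -- kernel of the completion map
  have hker : ∀ x : R', φ x = 0 ↔ ∀ n : ℕ, x ∈ J ^ n := by
    intro x
    constructor
    · intro h n
      have h1 : (φ x).val n = 0 := by rw [h]; rfl
      rw [hφdef, AdicCompletion.of_apply, Submodule.mkQ_apply,
        Submodule.Quotient.mk_eq_zero, hIR' n] at h1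
      exact h1
    · intro h
      apply AdicCompletion.ext
      intro n
      rw [hφdef, AdicCompletion.of_apply, AdicCompletion.val_zero, Pi.zero_apply, Submodule.mkQ_apply,
        Submodule.Quotient.mk_eq_zero, hIR' n]
      exact h n
  -- elements of B vanishing at level 1 lie in J • B
  have hkerEval : ∀ x : B, x.val 1 = 0 → x ∈ (J • ⊤ : Submodule R' B) := by
    intro x hx1
    set K : Submodule R' R' := J • ⊤ with hKdef
    haveI : Module.Finite R' K := Module.Finite.iff_fg.mpr (IsNoetherian.noetherian K)
    have hexact := AdicCompletion.map_exact (I := J) (Submodule.injective_subtype K)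
      (LinearMap.exact_subtype_mkQ K) (Submodule.mkQ_surjective K)
    have h0 : AdicCompletion.map J K.mkQ x = 0 := by
      apply AdicCompletion.ext
      intro n
      rw [AdicCompletion.map_val_apply, AdicCompletion.val_zero, Pi.zero_apply]
      obtain ⟨a, ha⟩ := Submodule.Quotient.mk_surjective _ (x.val n)
      rw [← ha, LinearMap.reduceModIdeal_apply]
      cases n with
      | zero =>
        rw [Submodule.Quotient.mk_eq_zero]
        have htop : ((J ^ 0 : Ideal R') • ⊤ : Submodule R' (R' ⧸ K)) = ⊤ := by
          rw [pow_zero, Ideal.one_eq_top, Submodule.top_smul]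
        rw [htop]
        trivial
      | succ k =>
        have h2 := AdicCompletion.transitionMap_comp_eval_apply (I := J) (M := R')
          (Nat.succ_le_succ (Nat.zero_le k)) x
        rw [hx1, ← ha, ← Submodule.mkQ_apply, Submodule.factor_mk] at h2
        have hmem : a ∈ K := by
          have h3 := (Submodule.Quotient.mk_eq_zero _).mp h2
          rwa [pow_one] at h3
        have : K.mkQ a = 0 := (Submodule.Quotient.mk_eq_zero K).mpr hmem
        rw [this, Submodule.Quotient.mk_eq_zero]
        exact Submodule.zero_mem _
    obtain ⟨y, hy⟩ := (hexact x).mp h0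
    obtain ⟨z, hz⟩ := AdicCompletion.ofTensorProduct_surjective_of_finite (I := J) (M := K) y
    rw [← hy, ← hz]
    clear hz
    induction z using TensorProduct.induction_on with
    | zero => rw [map_zero, map_zero]; exact Submodule.zero_mem _
    | tmul b k0 =>
      rw [AdicCompletion.ofTensorProduct_tmul, map_smul]
      have hk0 : (k0 : R') ∈ J := by
        have h4 : (k0 : R') ∈ (J • ⊤ : Submodule R' R') := k0.2
        rwa [Ideal.smul_eq_mul, Ideal.mul_top] at h4
      have h5 : AdicCompletion.map J K.subtype (AdicCompletion.of J K k0)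
          = φ (k0 : R') := by
        apply AdicCompletion.ext
        intro n
        rw [AdicCompletion.map_val_apply, hφdef, AdicCompletion.of_apply,
          AdicCompletion.of_apply, Submodule.mkQ_apply, LinearMap.reduceModIdeal_apply,
          Submodule.mkQ_apply]
        rfl
      rw [h5]
      have h6 : φ (k0 : R') = (k0 : R') • φ 1 := by
        rw [← map_smul, smul_eq_mul, mul_one]
      rw [h6, smul_comm]
      exact Submodule.smul_mem_smul hk0 Submodule.mem_top
    | add u v hu hv =>
      rw [map_add, map_add]
      exact Submodule.add_mem _ hu hv
  -- residue finiteness and generators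
  haveI hfinQ : Module.Finite R (R' ⧸ J) := by
    rw [hJdef, hmdef]
    exact finite_mod_max_aux R R'
  obtain ⟨s, hs⟩ := hfinQ.fg_top
  have hlift : ∀ q : R' ⧸ J, ∃ a : R', Ideal.Quotient.mk J a = q := Ideal.Quotient.mk_surjective
  choose lift hliftspec using hlift
  set s' : Finset R' := s.image lift with hs'def
  set π : R' →ₗ[R] R' ⧸ J := (IsScalarTower.toAlgHom R R' (R' ⧸ J)).toLinearMap with hπdef
  have hπapp : ∀ a : R', π a = Ideal.Quotient.mk J a := fun a => by
    rw [hπdef]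
    show algebraMap R' (R' ⧸ J) a = Ideal.Quotient.mk J a
    rw [Ideal.Quotient.algebraMap_eq]
  have hA : (Submodule.span R (↑s' : Set R')) ⊔ (m • ⊤ : Submodule R R') = ⊤ := by
    rw [eq_top_iff]
    intro a _
    have himg : Submodule.map π (Submodule.span R (↑s' : Set R')) = ⊤ := by
      rw [Submodule.map_span]
      have himg2 : π '' ↑s' = ↑s := by
        rw [hs'def, Finset.coe_image, ← Set.image_comp]
        have : ∀ q ∈ (↑s : Set (R' ⧸ J)), (π ∘ lift) q = q := fun q _ => by
          rw [Function.comp_apply, hπapp, hliftspec]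
        rw [Set.image_congr this, Set.image_id']
      rw [himg2, hs]
    have hπa : π a ∈ Submodule.map π (Submodule.span R (↑s' : Set R')) := by
      rw [himg]; trivial
    obtain ⟨b, hb, hba⟩ := hπa
    refine Submodule.mem_sup.mpr ⟨b, hb, a - b, ?_, by ring⟩
    have hab : a - b ∈ J := by
      have : π (a - b) = 0 := by rw [map_sub, hba, sub_self]
      rw [hπapp] at this
      exact Ideal.Quotient.eq_zero_iff_mem.mp this
    rw [Ideal.smul_top_eq_map, Submodule.restrictScalars_mem, ← hJdef]
    exact hab
  -- surjectivity of the completion map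
  have hsurj : Function.Surjective φ := by
    set N : Submodule R B := Submodule.map (φ.restrictScalars R)
      (Submodule.span R (↑s' : Set R')) with hNdef
    have hNfg : N.FG := Submodule.FG.map _ ⟨s', rfl⟩
    have hNsup : N ⊔ (m • ⊤ : Submodule R B) = ⊤ := by
      rw [eq_top_iff]
      intro b _
      obtain ⟨a, ha⟩ := Submodule.Quotient.mk_surjective _ (b.val 1)
      have hdiff : b - φ a ∈ (m • ⊤ : Submodule R B) := by
        have h1 : (b - φ a).val 1 = 0 := by
          rw [AdicCompletion.val_sub, Pi.sub_apply, hφdef, AdicCompletion.of_apply, Submodule.mkQ_apply,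
            ha, sub_self]
        have h2 := hkerEval _ h1
        have h3 := (smul_top_iff_aux (R' := R') m 1 (b - φ a))
        rw [pow_one, pow_one, ← hJdef] at h3
        exact h3.mpr h2
      obtain ⟨u, hu, v, hv, huv⟩ := Submodule.mem_sup.mp (hA ▸ (Submodule.mem_top : a ∈ ⊤))
      have hφu : φ u ∈ N := Submodule.mem_map_of_mem hu
      have hφv : φ v ∈ (m • ⊤ : Submodule R B) := by
        have h4 : φ v ∈ Submodule.map (φ.restrictScalars R) (m • ⊤ : Submodule R R') :=
          Submodule.mem_map_of_mem hv
        rw [Submodule.map_smul''] at h4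
        exact Submodule.smul_mono le_rfl le_top h4
      have hsum : φ u + φ v = φ a := by rw [← map_add, huv]
      have hb : b = (b - φ a) + (φ u + φ v) := by rw [hsum]; abel
      rw [hb]
      exact Submodule.add_mem _ (Submodule.mem_sup_right hdiff)
        (Submodule.add_mem _ (Submodule.mem_sup_left hφu) (Submodule.mem_sup_right hφv))
    have hNhaus : (⨅ n : ℕ, ((m ^ n : Ideal R) • ⊤ : Submodule R B)) = ⊥ := by
      rw [eq_bot_iff]
      intro x hx
      rw [Submodule.mem_bot]
      refine IsHausdorff.haus (inferInstance : IsHausdorff J B) x fun n => ?_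
      rw [SModEq.sub_mem, sub_zero]
      have h5 := Submodule.mem_iInf _ |>.mp hx n
      have h6 := smul_top_iff_aux (R' := R') m n x
      rw [← hJdef] at h6
      exact h6.mp h5
    have hNtop := complete_nakayama' m hNfg hNsup hNhaus
    intro b
    have hb : b ∈ N := hNtop ▸ (Submodule.mem_top : b ∈ ⊤)
    obtain ⟨a, _, ha⟩ := hb
    exact ⟨a, ha⟩
  -- flatness of B gives that the kernel is idempotent
  haveI hflatB : Module.Flat R' B := (AdicCompletion.flat_of_isNoetherian (I := J))
  set I₀ : Ideal R' := LinearMap.ker φ with hI0def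
  haveI hflatQ : Module.Flat R' (R' ⧸ I₀) :=
    Module.Flat.of_linearEquiv (φ.quotKerEquivOfSurjective hsurj)
  have hI2 : I₀ * I₀ = I₀ := by
    have hinj : Function.Injective (LinearMap.rTensor (R' ⧸ I₀) I₀.subtype) :=
      Module.Flat.rTensor_preserves_injective_linearMap I₀.subtype
        (Submodule.injective_subtype I₀)
    have hzero : ∀ z : TensorProduct R' (↥I₀) (R' ⧸ I₀), z = 0 := by
      intro z
      apply hinj
      rw [map_zero]
      have : (TensorProduct.lid R' (R' ⧸ I₀)).toLinearMap
          ((LinearMap.rTensor (R' ⧸ I₀) I₀.subtype) z) = 0 := by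
        induction z using TensorProduct.induction_on with
        | zero => rw [map_zero, map_zero]
        | tmul w q =>
          obtain ⟨b, hb⟩ := Ideal.Quotient.mk_surjective q
          rw [LinearMap.rTensor_tmul]
          simp only [LinearEquiv.coe_coe, TensorProduct.lid_tmul]
          rw [← hb]
          rw [show (Submodule.subtype I₀) w • (Ideal.Quotient.mk I₀ b)
              = Ideal.Quotient.mk I₀ ((w : R') * b) from rfl, Ideal.Quotient.eq_zero_iff_mem]
          exact Ideal.mul_mem_right b I₀ w.2
        | add u v hu hv => rw [map_add, map_add, hu, hv, add_zero]
      have hlidinj : Function.Injective (TensorProduct.lid R' (R' ⧸ I₀)).toLinearMap :=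
        (TensorProduct.lid R' (R' ⧸ I₀)).injective
      apply hlidinj
      rw [this, map_zero]
    haveI hss : Subsingleton (TensorProduct R' (↥I₀) (R' ⧸ I₀)) :=
      ⟨fun a b => by rw [hzero a, hzero b]⟩
    haveI hss2 : Subsingleton ((↥I₀) ⧸ (I₀ • ⊤ : Submodule R' ↥I₀)) :=
      (TensorProduct.tensorQuotEquivQuotSMul (↥I₀) I₀).symm.toEquiv.subsingleton
    have htop : (I₀ • ⊤ : Submodule R' ↥I₀) = ⊤ :=
      Submodule.Quotient.subsingleton_iff.mp hss2
    apply le_antisymm Ideal.mul_le_right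
    intro x hx
    have h7 : (⟨x, hx⟩ : ↥I₀) ∈ (⊤ : Submodule R' ↥I₀) := Submodule.mem_top
    rw [← htop] at h7
    have h8 : x ∈ Submodule.map I₀.subtype (I₀ • ⊤ : Submodule R' ↥I₀) :=
      ⟨⟨x, hx⟩, h7, rfl⟩
    rw [Submodule.map_smul'', Submodule.map_top, Submodule.range_subtype,
      Ideal.smul_eq_mul] at h8
    exact h8
  obtain ⟨e, he, hIe⟩ := (Ideal.isIdempotentElem_iff_of_fg I₀ (IsNoetherian.noetherian I₀)).mp hI2
  have hspan : Ideal.span {e} = I₀ := by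
    rw [hIe, Ideal.submodule_span_eq]
  have heI : e ∈ I₀ := by
    rw [← hspan]
    exact Ideal.mem_span_singleton_self e
  have heJ : e ∈ J := by
    have h9 := (hker e).mp (LinearMap.mem_ker.mp heI) 1
    rwa [pow_one] at h9
  -- the two factors
  have hsub : (1 : R') - (1 - e) = e := by ring
  haveI hlocT : IsLocalization.Away (1 - e) (R' ⧸ Ideal.span {e}) := by
    have h := IsLocalization.Away.quotient_of_isIdempotentElem he.one_sub
    rwa [hsub] at h
  haveI hlocS : IsLocalization.Away e (R' ⧸ Ideal.span {1 - e}) :=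
    IsLocalization.Away.quotient_of_isIdempotentElem he
  haveI : Algebra.Etale R' (R' ⧸ Ideal.span {e}) := Algebra.Etale.of_isLocalizationAway (1 - e)
  haveI : Algebra.Etale R' (R' ⧸ Ideal.span {1 - e}) := Algebra.Etale.of_isLocalizationAway e
  haveI hTet : Algebra.Etale R (R' ⧸ Ideal.span {e}) :=
    Algebra.Etale.comp R R' (R' ⧸ Ideal.span {e})
  haveI hSet : Algebra.Etale R (R' ⧸ Ideal.span {1 - e}) :=
    Algebra.Etale.comp R R' (R' ⧸ Ideal.span {1 - e})
  -- finiteness of T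
  haveI hTfin : Module.Finite R (R' ⧸ Ideal.span {e}) := by
    set πT : R' →ₗ[R] R' ⧸ Ideal.span {e} :=
      (IsScalarTower.toAlgHom R R' (R' ⧸ Ideal.span {e})).toLinearMap with hπT
    have hπTapp : ∀ a : R', πT a = Ideal.Quotient.mk (Ideal.span {e}) a := fun a => by
      rw [hπT]
      show algebraMap R' (R' ⧸ Ideal.span {e}) a = Ideal.Quotient.mk (Ideal.span {e}) a
      rw [Ideal.Quotient.algebraMap_eq]
    have hπTsurj : Function.Surjective πT := by
      intro t
      obtain ⟨a, ha⟩ := Ideal.Quotient.mk_surjective t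
      exact ⟨a, by rw [hπTapp, ha]⟩
    set NT : Submodule R (R' ⧸ Ideal.span {e}) :=
      Submodule.map πT (Submodule.span R (↑s' : Set R')) with hNT
    have hNTfg : NT.FG := Submodule.FG.map _ ⟨s', rfl⟩
    have hNTsup : NT ⊔ (m • ⊤ : Submodule R (R' ⧸ Ideal.span {e})) = ⊤ := by
      rw [eq_top_iff]
      intro t _
      obtain ⟨a, ha⟩ := hπTsurj t
      obtain ⟨u, hu, v, hv, huv⟩ := Submodule.mem_sup.mp (hA ▸ (Submodule.mem_top : a ∈ ⊤))
      have h1 : πT u ∈ NT := Submodule.mem_map_of_mem hu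
      have h2 : πT v ∈ (m • ⊤ : Submodule R (R' ⧸ Ideal.span {e})) := by
        have h4 : πT v ∈ Submodule.map πT (m • ⊤ : Submodule R R') :=
          Submodule.mem_map_of_mem hv
        rw [Submodule.map_smul''] at h4
        exact Submodule.smul_mono le_rfl le_top h4
      have ht : t = πT u + πT v := by rw [← map_add, huv, ha]
      rw [ht]
      exact Submodule.add_mem _ (Submodule.mem_sup_left h1) (Submodule.mem_sup_right h2)
    have hNThaus : (⨅ n : ℕ, ((m ^ n : Ideal R) • ⊤ :
        Submodule R (R' ⧸ Ideal.span {e}))) = ⊥ := by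
      rw [eq_bot_iff]
      intro x hx
      rw [Submodule.mem_bot]
      obtain ⟨a, ha⟩ := hπTsurj x
      have hxn : ∀ n : ℕ, a ∈ J ^ n := by
        intro n
        have h5 := Submodule.mem_iInf _ |>.mp hx n
        have h6 := smul_top_iff_aux (R' := R') m n x
        rw [← hJdef] at h6
        have h7 := h6.mp h5
        rw [Ideal.smul_top_eq_map, Submodule.restrictScalars_mem] at h7
        rw [Ideal.Quotient.algebraMap_eq] at h7
        obtain ⟨b, hb, hba⟩ := Ideal.mem_map_iff_of_surjective _
          Ideal.Quotient.mk_surjective |>.mp h7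
        have h8' : Ideal.Quotient.mk (Ideal.span {e}) a
            = Ideal.Quotient.mk (Ideal.span {e}) b := by
          rw [← hπTapp a, ha]
          exact hba.symm
        have h8 : a - b ∈ Ideal.span {e} := Ideal.Quotient.eq.mp h8'
        have h8J : a - b ∈ I₀ := hspan ▸ h8
        have h9 : a - b ∈ J ^ n := (hker (a - b)).mp (LinearMap.mem_ker.mp h8J) n
        have : a = b + (a - b) := by ring
        rw [this]
        exact Ideal.add_mem _ hb h9
      have haI : a ∈ I₀ := LinearMap.mem_ker.mpr ((hker a).mpr hxn)
      rw [← ha, hπTapp]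
      exact Ideal.Quotient.eq_zero_iff_mem.mpr (hspan ▸ haI)
    have hNTtop := complete_nakayama' m hNTfg hNTsup hNThaus
    exact ⟨hNTtop ▸ hNTfg⟩
  -- the algebra isomorphism
  set f : R' →ₐ[R] (R' ⧸ Ideal.span {e}) × (R' ⧸ Ideal.span {1 - e}) :=
    (Ideal.Quotient.mkₐ R (Ideal.span {e})).prod (Ideal.Quotient.mkₐ R (Ideal.span {1 - e}))
    with hfdef
  have hmkTe : Ideal.Quotient.mk (Ideal.span {e}) e = 0 :=
    Ideal.Quotient.eq_zero_iff_mem.mpr (Ideal.mem_span_singleton_self e)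
  have hmkSe : Ideal.Quotient.mk (Ideal.span {1 - e}) e = 1 := by
    have h1 : Ideal.Quotient.mk (Ideal.span {1 - e}) (1 - e) = 0 :=
      Ideal.Quotient.eq_zero_iff_mem.mpr (Ideal.mem_span_singleton_self (1 - e))
    rw [map_sub, map_one, sub_eq_zero] at h1
    exact h1.symm
  have hfinj : Function.Injective f := by
    rw [injective_iff_map_eq_zero]
    intro a ha
    rw [hfdef] at ha
    have h1 : Ideal.Quotient.mk (Ideal.span {e}) a = 0 := congrArg Prod.fst ha
    have h2 : Ideal.Quotient.mk (Ideal.span {1 - e}) a = 0 := congrArg Prod.snd ha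
    obtain ⟨c, hc⟩ := Ideal.mem_span_singleton'.mp (Ideal.Quotient.eq_zero_iff_mem.mp h1)
    obtain ⟨d, hd⟩ := Ideal.mem_span_singleton'.mp (Ideal.Quotient.eq_zero_iff_mem.mp h2)
    have hae : a * e = a := by
      rw [← hc, mul_assoc, he.eq]
    have hae0 : a * e = 0 := by
      rw [← hd, mul_assoc, sub_mul, one_mul, he.eq, sub_self, mul_zero]
    rw [← hae, hae0]
  have hfsurj : Function.Surjective f := by
    rintro ⟨t, s0⟩
    obtain ⟨a, ha⟩ := Ideal.Quotient.mk_surjective t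
    obtain ⟨b, hb⟩ := Ideal.Quotient.mk_surjective s0
    refine ⟨a * (1 - e) + b * e, ?_⟩
    rw [hfdef]
    have hT1 : Ideal.Quotient.mk (Ideal.span {e}) (a * (1 - e) + b * e) = t := by
      rw [map_add, map_mul, map_mul, map_sub, map_one, hmkTe, mul_zero, add_zero, sub_zero,
        mul_one, ha]
    have hS1 : Ideal.Quotient.mk (Ideal.span {1 - e}) (a * (1 - e) + b * e) = s0 := by
      rw [map_add, map_mul, map_mul, map_sub, map_one, hmkSe, sub_self, mul_zero, zero_add,
        mul_one, hb]
    exact Prod.ext hT1 hS1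
  have ψ : R' ≃ₐ[R] (R' ⧸ Ideal.span {e}) × (R' ⧸ Ideal.span {1 - e}) :=
    AlgEquiv.ofBijective f ⟨hfinj, hfsurj⟩
  -- m S = S
  have hmS : m • (⊤ : Submodule R (R' ⧸ Ideal.span {1 - e})) = ⊤ := by
    rw [eq_top_iff]
    intro x _
    rw [Ideal.smul_top_eq_map, Submodule.restrictScalars_mem]
    have hxe : x = x * (Ideal.Quotient.mk (Ideal.span {1 - e}) e) := by
      rw [hmkSe, mul_one]
    rw [hxe]
    apply Ideal.mul_mem_left
    have h10 : Ideal.Quotient.mk (Ideal.span {1 - e}) e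
        ∈ J.map (algebraMap R' (R' ⧸ Ideal.span {1 - e})) := by
      rw [Ideal.Quotient.algebraMap_eq]
      exact Ideal.mem_map_of_mem _ heJ
    rw [IsScalarTower.algebraMap_eq R R' (R' ⧸ Ideal.span {1 - e}), ← Ideal.map_map, ← hJdef]
    exact h10
  have hnff : ¬ Module.FaithfullyFlat R (R' ⧸ Ideal.span {1 - e}) := by
    intro h
    exact h.submodule_ne_top (IsLocalRing.maximalIdeal.isMaximal R) hmS
  exact ⟨R' ⧸ Ideal.span {e}, R' ⧸ Ideal.span {1 - e}, inferInstance, inferInstance,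
    inferInstance, inferInstance, ⟨ψ⟩, hTet, hTfin, hSet, hmS, hnff⟩
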